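/- For l, l' ∈ ℂ with l ≠ ±l', there is no nonzero linear map on the free module with basis (e_p)_{p∈ℤ} intertwining the sl(2)-actions with parameters l and l' (with the same parity k), because the Casimir Ω = (1/4)H² + (1/2)(EF+FE) acts on the parameter-l principal series module as the scalar (l²-1)/4. -/
import Mathlib


/-- Operator on the free ℂ-module on basis `(e_p)_{p ∈ ℤ}` (encoded as `ℤ →₀ ℂ`)
sending `e_p` to `a p • e_(p+s)`. -/
noncomputable def sop (a : ℤ → ℂ) (s : ℤ) : Module.End ℂ (ℤ →₀ ℂ) :=
  Finsupp.lsum ℂ fun p => a p • Finsupp.lsingle (p + s)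

/-- `E e_p = (-(p + k/2) - (l-1)/2) e_(p-1)`. -/
noncomputable def Eop (k l : ℂ) : Module.End ℂ (ℤ →₀ ℂ) :=
  sop (fun p => -((p : ℂ) + k / 2) - (l - 1) / 2) (-1)
/-- `F e_p = ((p + k/2) - (l-1)/2) e_(p+1)`. -/
noncomputable def Fop (k l : ℂ) : Module.End ℂ (ℤ →₀ ℂ) :=
  sop (fun p => ((p : ℂ) + k / 2) - (l - 1) / 2) 1
/-- `H e_p = -2 (p + k/2) e_p`. -/
noncomputable def Hop (k : ℂ) : Module.End ℂ (ℤ →₀ ℂ) :=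
  sop (fun p => -2 * ((p : ℂ) + k / 2)) 0

/-- The Casimir operator `Ω = (1/4) H² + (1/2)(EF + FE)` of the parameter-`l`
principal series module. -/
noncomputable def Casimir (k l : ℂ) : Module.End ℂ (ℤ →₀ ℂ) :=
  (1 / 4 : ℂ) • (Hop k * Hop k) +
    (1 / 2 : ℂ) • (Eop k l * Fop k l + Fop k l * Eop k l)

lemma sop_single (a : ℤ → ℂ) (s p : ℤ) :
    sop a s (Finsupp.single p 1) = a p • Finsupp.single (p + s) 1 := by
  simp only [sop, Finsupp.lsum_single, LinearMap.smul_apply, Finsupp.lsingle_apply]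

lemma casimir_scalar (k l : ℂ) :
    Casimir k l = ((l ^ 2 - 1) / 4) • (1 : Module.End ℂ (ℤ →₀ ℂ)) := by
  refine Module.Basis.ext (Finsupp.basisSingleOne) fun p => ?_
  rw [Finsupp.coe_basisSingleOne]
  simp only [Casimir, Eop, Fop, Hop, LinearMap.add_apply, LinearMap.smul_apply,
    Module.End.mul_apply, Module.End.one_apply, LinearMap.comp_apply, sop_single,
    map_smul, smul_smul]
  have h2 : (p : ℤ) + 1 + -1 = p := by ring
  have h3 : (p : ℤ) + -1 + 1 = p := by ring
  rw [h2, h3, show (p : ℤ) + 0 + 0 = p by ring]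
  ext q
  by_cases hq : p = q <;>
    simp [Finsupp.single_apply, hq, smul_eq_mul] <;> push_cast <;> ring

theorem casimir_scalar_and_no_intertwiner (k : ℂ) (hk : k = 0 ∨ k = 1) :
    (∀ l : ℂ, Casimir k l = ((l ^ 2 - 1) / 4) • (1 : Module.End ℂ (ℤ →₀ ℂ))) ∧
    (∀ l l' : ℂ, l ≠ l' → l ≠ -l' →
      ∀ A : (ℤ →₀ ℂ) →ₗ[ℂ] (ℤ →₀ ℂ),
        (A ∘ₗ Eop k l = Eop k l' ∘ₗ A) →
        (A ∘ₗ Fop k l = Fop k l' ∘ₗ A) →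
        (A ∘ₗ Hop k = Hop k ∘ₗ A) →
        A = 0) := by
  refine ⟨casimir_scalar k, fun l l' h1 h2 A hE hF hH => ?_⟩
  have key : A ∘ₗ Casimir k l = Casimir k l' ∘ₗ A := by
    simp only [Casimir, LinearMap.comp_add, LinearMap.add_comp,
      LinearMap.comp_smul, LinearMap.smul_comp]
    have hmul : ∀ (X Y X' Y' : Module.End ℂ (ℤ →₀ ℂ)),
        A ∘ₗ X = X' ∘ₗ A → A ∘ₗ Y = Y' ∘ₗ A → A ∘ₗ (X * Y) = (X' * Y') ∘ₗ A := by
      intro X Y X' Y' hX hY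
      show A ∘ₗ (X ∘ₗ Y) = (X' ∘ₗ Y') ∘ₗ A
      rw [← LinearMap.comp_assoc, hX, LinearMap.comp_assoc, hY,
        ← LinearMap.comp_assoc]
    rw [hmul _ _ _ _ hH hH, hmul _ _ _ _ hE hF, hmul _ _ _ _ hF hE]
  rw [casimir_scalar k l, casimir_scalar k l'] at key
  have hc : ((l ^ 2 - 1) / 4 : ℂ) - (l' ^ 2 - 1) / 4 ≠ 0 := by
    have hne : (l - l') * (l + l') ≠ 0 :=
      mul_ne_zero (sub_ne_zero.mpr h1) (by
        intro h; exact h2 (by linear_combination h))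
    intro h
    exact hne (by linear_combination 4 * h)
  apply LinearMap.ext; intro x
  have hx := LinearMap.congr_fun key x
  simp only [LinearMap.comp_apply, LinearMap.smul_apply, Module.End.one_apply,
    map_smul] at hx
  have hz : (((l ^ 2 - 1) / 4 : ℂ) - (l' ^ 2 - 1) / 4) • A x = 0 := by
    rw [sub_smul, hx, sub_self]
  rcases smul_eq_zero.mp hz with h | h
  · exact absurd h hc
  · simpa using h
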